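/- Let M, K be positive integers, let Γ and Ĝ be real M×K matrices, and let Λ and Λ̂ be real K×K matrices. Suppose Γᵀ·Ĝ and Λ̂ are invertible, and set A = Λ·Λ̂⁻¹. Then ‖Ĝ − Γ·A‖_F ≤ ‖Ĝ·Λ̂ − Γ·Λ‖_F · ‖(Γᵀ·Ĝ·Λ̂)⁻¹‖_F · ‖Γᵀ·Ĝ‖_F. -/
import Mathlib

open Matrix Finset

/-- The Frobenius norm of a real matrix. -/
noncomputable def frobeniusNorm' {m n : Type*} [Fintype m] [Fintype n]
    (A : Matrix m n ℝ) : ℝ :=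
  Real.sqrt (∑ i, ∑ j, (A i j) ^ 2)

attribute [local instance] Matrix.frobeniusNormedAddCommGroup

lemma frobeniusNorm'_eq {m n : Type*} [Fintype m] [Fintype n]
    (A : Matrix m n ℝ) : frobeniusNorm' A = ‖A‖ := by
  rw [Matrix.frobenius_norm_def, frobeniusNorm']
  rw [Real.sqrt_eq_rpow]
  congr 1
  refine Finset.sum_congr rfl fun i _ => Finset.sum_congr rfl fun j _ => ?_
  rw [Real.norm_eq_abs, Real.rpow_two, sq_abs]

/-- the deterministic bound in Step 2 of the consistency proof:
`‖Ĝ − Γ·A‖_F ≤ ‖Ĝ·Λ̂ − Γ·Λ‖_F · ‖(Γᵀ·Ĝ·Λ̂)⁻¹‖_F · ‖Γᵀ·Ĝ‖_F` with `A = Λ·Λ̂⁻¹`. -/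
theorem nmf_step2_bound
    (M K : ℕ) (hM : 0 < M) (hK : 0 < K)
    (Γ Ghat : Matrix (Fin M) (Fin K) ℝ)
    (Λ Λhat : Matrix (Fin K) (Fin K) ℝ)
    (hGG : IsUnit (Γᵀ * Ghat)) (hΛhat : IsUnit Λhat)
    (A : Matrix (Fin K) (Fin K) ℝ) (hA : A = Λ * Λhat⁻¹) :
    frobeniusNorm' (Ghat - Γ * A)
      ≤ frobeniusNorm' (Ghat * Λhat - Γ * Λ)
        * frobeniusNorm' ((Γᵀ * Ghat * Λhat)⁻¹)
        * frobeniusNorm' (Γᵀ * Ghat) := by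
  have hGGd : IsUnit (Γᵀ * Ghat).det := (Matrix.isUnit_iff_isUnit_det _).mp hGG
  have hΛd : IsUnit Λhat.det := (Matrix.isUnit_iff_isUnit_det _).mp hΛhat
  have key : Ghat - Γ * A
      = (Ghat * Λhat - Γ * Λ) * (Γᵀ * Ghat * Λhat)⁻¹ * (Γᵀ * Ghat) := by
    rw [Matrix.mul_inv_rev, hA]
    rw [Matrix.mul_assoc, Matrix.mul_assoc, Matrix.nonsing_inv_mul _ hGGd,
      Matrix.mul_one, Matrix.sub_mul, Matrix.mul_assoc,
      Matrix.mul_nonsing_inv _ hΛd, Matrix.mul_one, Matrix.mul_assoc]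
  rw [key, frobeniusNorm'_eq, frobeniusNorm'_eq, frobeniusNorm'_eq, frobeniusNorm'_eq]
  calc ‖(Ghat * Λhat - Γ * Λ) * (Γᵀ * Ghat * Λhat)⁻¹ * (Γᵀ * Ghat)‖
      ≤ ‖(Ghat * Λhat - Γ * Λ) * (Γᵀ * Ghat * Λhat)⁻¹‖ * ‖Γᵀ * Ghat‖ :=
        Matrix.frobenius_norm_mul _ _
    _ ≤ ‖Ghat * Λhat - Γ * Λ‖ * ‖(Γᵀ * Ghat * Λhat)⁻¹‖ * ‖Γᵀ * Ghat‖ := by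
        exact mul_le_mul_of_nonneg_right (Matrix.frobenius_norm_mul _ _) (norm_nonneg _)
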